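/- A signed graph G has a unique Laplacian inertia if and only if no block of G contains both a positive edge and a negative edge. -/

import Mathlib

open scoped Classical
open Polynomial

namespace SGPaper

/-- A weighted signed graph on `n` vertices, given by its symmetric hollow
matrix of edge weights (a nonzero entry `w i j` is the weight of the edge `ij`;
positive edges have positive weight, negative edges negative weight). -/
structure WSG (n : ℕ) where
  w : Matrix (Fin n) (Fin n) ℝ
  symm : w.IsSymm
  loopless : ∀ i, w i i = 0

variable {n : ℕ}

/-- The underlying simple graph. -/
def WSG.graph (Γ : WSG n) : SimpleGraph (Fin n) :=
  SimpleGraph.fromRel (fun i j => Γ.w i j ≠ 0)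

/-- The spanning subgraph of positive edges. -/
def WSG.posGraph (Γ : WSG n) : SimpleGraph (Fin n) :=
  SimpleGraph.fromRel (fun i j => 0 < Γ.w i j)

/-- The spanning subgraph of negative edges. -/
def WSG.negGraph (Γ : WSG n) : SimpleGraph (Fin n) :=
  SimpleGraph.fromRel (fun i j => Γ.w i j < 0)

/-- Number of connected components of a graph. -/
noncomputable def comps {V : Type*} (G : SimpleGraph V) : ℕ :=
  Nat.card G.ConnectedComponent

/-- Weighted Laplacian `L = A - D`. -/
def WSG.lap (Γ : WSG n) : Matrix (Fin n) (Fin n) ℝ :=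
  Γ.w - Matrix.diagonal (fun i => ∑ j, Γ.w i j)

theorem WSG.lap_isHermitian (Γ : WSG n) : Γ.lap.IsHermitian := by
  have h : Γ.lap.IsSymm := Γ.symm.sub (Matrix.isSymm_diagonal _)
  exact (Matrix.conjTranspose_eq_transpose_of_trivial _).trans h

/-- Number of positive eigenvalues of the Laplacian. -/
noncomputable def WSG.nPos (Γ : WSG n) : ℕ :=
  (Finset.univ.filter fun i => 0 < Γ.lap_isHermitian.eigenvalues i).card

/-- Number of negative eigenvalues of the Laplacian. -/
noncomputable def WSG.nNeg (Γ : WSG n) : ℕ :=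
  (Finset.univ.filter fun i => Γ.lap_isHermitian.eigenvalues i < 0).card

/-- Multiplicity of `0` as an eigenvalue of the Laplacian. -/
noncomputable def WSG.nZero (Γ : WSG n) : ℕ :=
  (Finset.univ.filter fun i => Γ.lap_isHermitian.eigenvalues i = 0).card

/-- The Laplacian inertia `(n₊, n₋, n₀)`. -/
noncomputable def WSG.inertia (Γ : WSG n) : ℕ × ℕ × ℕ := (Γ.nPos, Γ.nNeg, Γ.nZero)

/-- A signed graph: a pair of edge-disjoint simple graphs of positive and
negative edges on the vertex set `Fin n`. -/
structure SignedGraph (n : ℕ) where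
  pos : SimpleGraph (Fin n)
  neg : SimpleGraph (Fin n)
  disj : ∀ i j, ¬(pos.Adj i j ∧ neg.Adj i j)

/-- The underlying (unsigned) simple graph. -/
def SignedGraph.graph {n : ℕ} (G : SignedGraph n) : SimpleGraph (Fin n) := G.pos ⊔ G.neg

/-- `Γ` is a consistent weighting of the signed graph `G`: the positive edges of
`Γ` are exactly the positive edges of `G` and likewise for negative edges. -/
def Consistent {n : ℕ} (G : SignedGraph n) (Γ : WSG n) : Prop :=
  Γ.posGraph = G.pos ∧ Γ.negGraph = G.neg

/-- `G` has the unique Laplacian inertia `T`: every consistent weighting of `G`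
has Laplacian inertia `T`. -/
def HasUniqueInertia {n : ℕ} (G : SignedGraph n) (T : ℕ × ℕ × ℕ) : Prop :=
  ∀ Γ : WSG n, Consistent G Γ → Γ.inertia = T

/-- `B` is a block of `G`: a maximal set of vertices inducing a connected
subgraph with no cut vertex. -/
def IsBlock {V : Type*} (G : SimpleGraph V) (B : Set V) : Prop :=
  (G.induce B).Connected ∧
  (∀ v : V, (G.induce (B \ {v})).Preconnected) ∧
  ∀ B' : Set V, B ⊆ B' → (G.induce B').Connected →
    (∀ v : V, (G.induce (B' \ {v})).Preconnected) → B' = B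

section Spectral

variable {n : ℕ}

/-- The quadratic form of the Laplacian. -/
noncomputable def qf (Γ : WSG n) (x : EuclideanSpace ℝ (Fin n)) : ℝ :=
  inner ℝ x (show EuclideanSpace ℝ (Fin n) from WithLp.toLp 2 <| Γ.lap.mulVec x)

/-- Generic edge quadratic sum. -/
def eqs (w : Matrix (Fin n) (Fin n) ℝ) (x : Fin n → ℝ) : ℝ :=
  ∑ i, ∑ j, w i j * (x i - x j) ^ 2

lemma wsymm (Γ : WSG n) (i j : Fin n) : Γ.w j i = Γ.w i j :=
  congrFun (congrFun Γ.symm i) j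

lemma qf_eq (Γ : WSG n) (x : EuclideanSpace ℝ (Fin n)) :
    qf Γ x = -(1/2) * eqs Γ.w x := by
  have hsum : ∀ i, Γ.lap.mulVec x i
      = (∑ j, Γ.w i j * x j) - (∑ j, Γ.w i j) * x i := by
    intro i
    simp [Matrix.mulVec, dotProduct, WSG.lap, Matrix.sub_apply,
      Matrix.diagonal_apply, Finset.sum_sub_distrib, sub_mul, ite_mul]
  have hinner : qf Γ x = ∑ i, x i * (Γ.lap.mulVec x i) := by
    simp [qf, PiLp.inner_apply, RCLike.inner_apply, mul_comm]
  have hA : qf Γ x = (∑ i, ∑ j, Γ.w i j * (x i * x j))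
      - ∑ i, ∑ j, Γ.w i j * x i ^ 2 := by
    rw [hinner, ← Finset.sum_sub_distrib]
    refine Finset.sum_congr rfl fun i _ => ?_
    have e1 : x i * (∑ j, Γ.w i j * x j) = ∑ j, Γ.w i j * (x i * x j) := by
      rw [Finset.mul_sum]; exact Finset.sum_congr rfl fun j _ => by ring
    have e2 : x i * ((∑ j, Γ.w i j) * x i) = ∑ j, Γ.w i j * x i ^ 2 := by
      rw [Finset.sum_mul, Finset.mul_sum]
      exact Finset.sum_congr rfl fun j _ => by ring
    rw [hsum i, mul_sub, e1, e2, ← Finset.sum_sub_distrib]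
  have hB : eqs Γ.w x = (∑ i, ∑ j, Γ.w i j * x i ^ 2)
      - 2 * (∑ i, ∑ j, Γ.w i j * (x i * x j)) + (∑ i, ∑ j, Γ.w i j * x j ^ 2) := by
    have h1 : eqs Γ.w x = ∑ i, ∑ j,
        (Γ.w i j * x i ^ 2 - 2 * (Γ.w i j * (x i * x j)) + Γ.w i j * x j ^ 2) :=
      Finset.sum_congr rfl fun i _ => Finset.sum_congr rfl fun j _ => by ring
    rw [h1]
    simp only [Finset.sum_add_distrib, Finset.sum_sub_distrib, ← Finset.mul_sum]
  have hC : (∑ i, ∑ j, Γ.w i j * x j ^ 2) = ∑ i, ∑ j, Γ.w i j * x i ^ 2 := by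
    rw [Finset.sum_comm]
    exact Finset.sum_congr rfl fun j _ => Finset.sum_congr rfl fun i _ => by
      rw [wsymm]
  rw [hA, hB, hC]; ring

end Spectral
section Count

open Module

variable {n : ℕ}

lemma lap_isSymm (Γ : WSG n) : Γ.lap.IsSymm :=
  Γ.symm.sub (Matrix.isSymm_diagonal _)

lemma lapsymm (Γ : WSG n) (i j : Fin n) : Γ.lap j i = Γ.lap i j :=
  congrFun (congrFun (lap_isSymm Γ) i) j

lemma inner_lap_comm (Γ : WSG n) (x y : EuclideanSpace ℝ (Fin n)) :
    (inner ℝ (show EuclideanSpace ℝ (Fin n) from WithLp.toLp 2 <| Γ.lap.mulVec x) y : ℝ)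
      = inner ℝ x (show EuclideanSpace ℝ (Fin n) from WithLp.toLp 2 <| Γ.lap.mulVec y) := by
  simp only [PiLp.inner_apply, RCLike.inner_apply, conj_trivial]
  simp only [Matrix.mulVec, dotProduct]
  have h1 : ∑ i, y i * (∑ j, Γ.lap i j * x j) = ∑ i, ∑ j, y i * (Γ.lap i j * x j) :=
    Finset.sum_congr rfl fun i _ => Finset.mul_sum ..
  have h2 : ∑ i, (∑ j, Γ.lap i j * y j) * x i = ∑ i, ∑ j, Γ.lap i j * y j * x i :=
    Finset.sum_congr rfl fun i _ => Finset.sum_mul ..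
  rw [h1, h2, Finset.sum_comm]
  exact Finset.sum_congr rfl fun j _ => Finset.sum_congr rfl fun i _ => by
    rw [lapsymm Γ i j]; ring

lemma qf_eigen (Γ : WSG n) (x : EuclideanSpace ℝ (Fin n)) :
    qf Γ x = ∑ i, Γ.lap_isHermitian.eigenvalues i
      * (Γ.lap_isHermitian.eigenvectorBasis.repr x i) ^ 2 := by
  set b := Γ.lap_isHermitian.eigenvectorBasis with hb
  have hx : qf Γ x = inner ℝ (∑ i, b.repr x i • b i)
      (show EuclideanSpace ℝ (Fin n) from WithLp.toLp 2 <| Γ.lap.mulVec x) := by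
    rw [b.sum_repr x]; rfl
  rw [hx, sum_inner]
  refine Finset.sum_congr rfl fun i _ => ?_
  rw [inner_smul_left]
  have h1 : (inner ℝ (b i) (show EuclideanSpace ℝ (Fin n) from WithLp.toLp 2 <| Γ.lap.mulVec x) : ℝ)
      = inner ℝ (show EuclideanSpace ℝ (Fin n) from WithLp.toLp 2 <| Γ.lap.mulVec (b i)) x :=
    (inner_lap_comm Γ (b i) x).symm
  have h2 : (show EuclideanSpace ℝ (Fin n) from WithLp.toLp 2 <| Γ.lap.mulVec (b i))
      = Γ.lap_isHermitian.eigenvalues i • b i := by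
    exact congrArg (WithLp.toLp 2) (Γ.lap_isHermitian.mulVec_eigenvectorBasis i)
  rw [h1, h2, inner_smul_left]
  have h3 : (inner ℝ (b i) x : ℝ) = b.repr x i := (b.repr_apply_apply x i).symm
  simp only [conj_trivial, h3]
  ring

lemma nPos_nNeg_nZero_sum (Γ : WSG n) : Γ.nPos + Γ.nNeg + Γ.nZero = n := by
  classical
  set μ := Γ.lap_isHermitian.eigenvalues
  have hsplit : (Finset.univ.filter fun i => ¬ 0 < μ i)
      = (Finset.univ.filter fun i => μ i < 0) ∪ (Finset.univ.filter fun i => μ i = 0) := by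
    ext i
    simp only [Finset.mem_filter, Finset.mem_union, Finset.mem_univ, true_and, not_lt]
    constructor
    · intro h; rcases lt_or_eq_of_le h with h' | h'
      · exact Or.inl h'
      · exact Or.inr h'
    · rintro (h | h) <;> [exact le_of_lt h; exact le_of_eq h]
  have hdisj : Disjoint (Finset.univ.filter fun i => μ i < 0)
      (Finset.univ.filter fun i => μ i = 0) := by
    rw [Finset.disjoint_left]
    intro a ha hb
    simp only [Finset.mem_filter] at ha hb
    exact absurd hb.2 (ne_of_lt ha.2)
  have h1 : (Finset.univ.filter fun i => 0 < μ i).card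
      + (Finset.univ.filter fun i => ¬ 0 < μ i).card = n := by
    rw [Finset.card_filter_add_card_filter_not]
    simp
  rw [hsplit, Finset.card_union_of_disjoint hdisj] at h1
  simpa [WSG.nPos, WSG.nNeg, WSG.nZero, add_assoc] using h1

lemma finrank_le_nPos (Γ : WSG n) (W : Submodule ℝ (EuclideanSpace ℝ (Fin n)))
    (hW : ∀ x ∈ W, x ≠ 0 → 0 < qf Γ x) :
    finrank ℝ W ≤ Γ.nPos := by
  classical
  set b := Γ.lap_isHermitian.eigenvectorBasis with hb
  set μ := Γ.lap_isHermitian.eigenvalues with hμ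
  set s : Finset (Fin n) := Finset.univ.filter fun i => 0 < μ i with hs
  set V : Submodule ℝ (EuclideanSpace ℝ (Fin n)) :=
    Submodule.span ℝ (↑(s.image ⇑b) : Set (EuclideanSpace ℝ (Fin n))) with hV
  have hqU : ∀ x ∈ Vᗮ, qf Γ x ≤ 0 := by
    intro x hx
    rw [qf_eigen]
    apply Finset.sum_nonpos
    intro i _
    by_cases hi : 0 < μ i
    · have hbi : (b i) ∈ V :=
        Submodule.subset_span (by
          simp only [Finset.coe_image, Set.mem_image, Finset.mem_coe, Finset.mem_filter,
            Finset.mem_univ, true_and, hs]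
          exact ⟨i, hi, rfl⟩)
      have h0 : b.repr x i = 0 := by
        rw [b.repr_apply_apply]
        exact (Submodule.mem_orthogonal V x).mp hx (b i) hbi
      rw [hb] at h0
      simp [h0]
    · have : μ i ≤ 0 := not_lt.mp hi
      nlinarith [sq_nonneg (b.repr x i)]
  have hWU : W ⊓ Vᗮ = ⊥ := by
    rw [Submodule.eq_bot_iff]
    rintro x ⟨hxW, hxU⟩
    by_contra hx0
    exact absurd (hqU x hxU) (not_le.mpr (hW x hxW hx0))
  have hVle : finrank ℝ V ≤ Γ.nPos := by
    calc finrank ℝ V ≤ (s.image ⇑b).card := finrank_span_finset_le_card (R := ℝ) _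
      _ ≤ s.card := Finset.card_image_le
  have hVorth : finrank ℝ V + finrank ℝ Vᗮ = n := by
    rw [Submodule.finrank_add_finrank_orthogonal]
    simp [finrank_euclideanSpace]
  have hsup : finrank ℝ W + finrank ℝ Vᗮ ≤ n := by
    have h := Submodule.finrank_sup_add_finrank_inf_eq W Vᗮ
    rw [hWU, finrank_bot] at h
    have h2 : finrank ℝ ↥(W ⊔ Vᗮ) ≤ n := by
      have := Submodule.finrank_le (W ⊔ Vᗮ)
      simpa [finrank_euclideanSpace] using this
    omega
  omega

end Count
section Count2

open Module

variable {n : ℕ}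

lemma finrank_le_nNeg (Γ : WSG n) (W : Submodule ℝ (EuclideanSpace ℝ (Fin n)))
    (hW : ∀ x ∈ W, x ≠ 0 → qf Γ x < 0) :
    finrank ℝ W ≤ Γ.nNeg := by
  classical
  set b := Γ.lap_isHermitian.eigenvectorBasis with hb
  set μ := Γ.lap_isHermitian.eigenvalues with hμ
  set s : Finset (Fin n) := Finset.univ.filter fun i => μ i < 0 with hs
  set V : Submodule ℝ (EuclideanSpace ℝ (Fin n)) :=
    Submodule.span ℝ (↑(s.image ⇑b) : Set (EuclideanSpace ℝ (Fin n))) with hV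
  have hqU : ∀ x ∈ Vᗮ, 0 ≤ qf Γ x := by
    intro x hx
    rw [qf_eigen]
    apply Finset.sum_nonneg
    intro i _
    by_cases hi : μ i < 0
    · have hbi : (b i) ∈ V :=
        Submodule.subset_span (by
          simp only [Finset.coe_image, Set.mem_image, Finset.mem_coe, Finset.mem_filter,
            Finset.mem_univ, true_and, hs]
          exact ⟨i, hi, rfl⟩)
      have h0 : b.repr x i = 0 := by
        rw [b.repr_apply_apply]
        exact (Submodule.mem_orthogonal V x).mp hx (b i) hbi
      rw [hb] at h0
      simp [h0]
    · have : 0 ≤ μ i := not_lt.mp hi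
      nlinarith [sq_nonneg (b.repr x i)]
  have hWU : W ⊓ Vᗮ = ⊥ := by
    rw [Submodule.eq_bot_iff]
    rintro x ⟨hxW, hxU⟩
    by_contra hx0
    exact absurd (hqU x hxU) (not_le.mpr (hW x hxW hx0))
  have hVle : finrank ℝ V ≤ Γ.nNeg := by
    calc finrank ℝ V ≤ (s.image ⇑b).card := finrank_span_finset_le_card (R := ℝ) _
      _ ≤ s.card := Finset.card_image_le
  have hVorth : finrank ℝ V + finrank ℝ Vᗮ = n := by
    rw [Submodule.finrank_add_finrank_orthogonal]
    simp [finrank_euclideanSpace]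
  have hsup : finrank ℝ W + finrank ℝ Vᗮ ≤ n := by
    have h := Submodule.finrank_sup_add_finrank_inf_eq W Vᗮ
    rw [hWU, finrank_bot] at h
    have h2 : finrank ℝ ↥(W ⊔ Vᗮ) ≤ n := by
      have := Submodule.finrank_le (W ⊔ Vᗮ)
      simpa [finrank_euclideanSpace] using this
    omega
  omega

lemma finrank_le_nZero (Γ : WSG n) (W : Submodule ℝ (EuclideanSpace ℝ (Fin n)))
    (hW : ∀ x ∈ W, Γ.lap.mulVec x = 0) :
    finrank ℝ W ≤ Γ.nZero := by
  classical
  set b := Γ.lap_isHermitian.eigenvectorBasis with hb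
  set μ := Γ.lap_isHermitian.eigenvalues with hμ
  set s : Finset (Fin n) := Finset.univ.filter fun i => μ i ≠ 0 with hs
  set t : Finset (Fin n) := Finset.univ.filter fun i => μ i = 0 with ht
  set V : Submodule ℝ (EuclideanSpace ℝ (Fin n)) :=
    Submodule.span ℝ (↑(s.image ⇑b) : Set (EuclideanSpace ℝ (Fin n))) with hV
  -- W is contained in Vᗮ
  have hWV : W ≤ Vᗮ := by
    intro x hx
    rw [Submodule.mem_orthogonal]
    intro u hu
    -- show inner ℝ u x = 0 for u in the span
    have hgen : ∀ v ∈ (↑(s.image ⇑b) : Set (EuclideanSpace ℝ (Fin n))),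
        (inner ℝ v x : ℝ) = 0 := by
      rintro v hv
      simp only [Finset.coe_image, Set.mem_image, Finset.mem_coe, Finset.mem_filter,
        Finset.mem_univ, true_and, hs] at hv
      obtain ⟨i, hi, rfl⟩ := hv
      have key : μ i * (inner ℝ (b i) x : ℝ) = 0 := by
        have h2 : (show EuclideanSpace ℝ (Fin n) from WithLp.toLp 2 <| Γ.lap.mulVec (b i))
            = μ i • b i :=
            congrArg (WithLp.toLp 2) (Γ.lap_isHermitian.mulVec_eigenvectorBasis i)
        have h3 : (inner ℝ (show EuclideanSpace ℝ (Fin n) from WithLp.toLp 2 <| Γ.lap.mulVec (b i)) x : ℝ)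
            = inner ℝ (b i) (show EuclideanSpace ℝ (Fin n) from WithLp.toLp 2 <| Γ.lap.mulVec x) :=
          inner_lap_comm Γ (b i) x
        rw [h2] at h3
        rw [hW x hx] at h3
        simpa [inner_smul_left] using h3
      rcases mul_eq_zero.mp key with h | h
      · exact absurd h hi
      · exact h
    -- extend to the span by induction
    have : ∀ u ∈ Submodule.span ℝ (↑(s.image ⇑b) : Set (EuclideanSpace ℝ (Fin n))),
        (inner ℝ u x : ℝ) = 0 := by
      intro u hu
      induction hu using Submodule.span_induction with
      | mem v hv => exact hgen v hv
      | zero => simp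
      | add v w _ _ hv hw => rw [inner_add_left, hv, hw, add_zero]
      | smul c v _ hv => rw [inner_smul_left, hv, mul_zero]
    exact this u hu
  -- Vᗮ is contained in the span of the zero eigenvectors
  have hVorth_le : Vᗮ ≤ Submodule.span ℝ
      (↑(t.image ⇑b) : Set (EuclideanSpace ℝ (Fin n))) := by
    intro x hx
    have hrep : ∀ i ∈ s, b.repr x i = 0 := by
      intro i hi
      rw [b.repr_apply_apply]
      refine (Submodule.mem_orthogonal V x).mp hx (b i) ?_
      exact Submodule.subset_span (by
        simp only [Finset.coe_image, Set.mem_image, Finset.mem_coe]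
        exact ⟨i, hi, rfl⟩)
    have hzero : ∀ i ∈ Finset.univ, i ∉ t → b.repr x i • b i = 0 := by
      intro i _ hit
      have hμ0 : μ i ≠ 0 := by simpa [ht] using hit
      have his : i ∈ s := by simp [hs, hμ0]
      rw [hrep i his, zero_smul]
    have hxsum : x = ∑ i ∈ t, b.repr x i • b i := by
      conv_lhs => rw [← b.sum_repr x]
      exact (Finset.sum_subset (Finset.subset_univ t) hzero).symm
    rw [hxsum]
    exact Submodule.sum_mem _ fun i hi => Submodule.smul_mem _ _
      (Submodule.subset_span (by
        simp only [Finset.coe_image, Set.mem_image, Finset.mem_coe]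
        exact ⟨i, hi, rfl⟩))
  have h1 : finrank ℝ W ≤ finrank ℝ (Submodule.span ℝ
      (↑(t.image ⇑b) : Set (EuclideanSpace ℝ (Fin n)))) :=
    Submodule.finrank_mono (le_trans hWV hVorth_le)
  calc finrank ℝ W ≤ _ := h1
    _ ≤ (t.image ⇑b).card := finrank_span_finset_le_card (R := ℝ) _
    _ ≤ t.card := Finset.card_image_le
    _ = Γ.nZero := rfl

lemma inertia_eq_of_subspaces (Γ : WSG n)
    (Wp Wn Wz : Submodule ℝ (EuclideanSpace ℝ (Fin n)))
    (hp : ∀ x ∈ Wp, x ≠ 0 → 0 < qf Γ x)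
    (hn : ∀ x ∈ Wn, x ≠ 0 → qf Γ x < 0)
    (hz : ∀ x ∈ Wz, Γ.lap.mulVec x = 0)
    (hsum : finrank ℝ Wp + finrank ℝ Wn + finrank ℝ Wz = n) :
    Γ.inertia = (finrank ℝ Wp, finrank ℝ Wn, finrank ℝ Wz) := by
  have h1 := finrank_le_nPos Γ Wp hp
  have h2 := finrank_le_nNeg Γ Wn hn
  have h3 := finrank_le_nZero Γ Wz hz
  have h4 := nPos_nNeg_nZero_sum Γ
  have e1 : Γ.nPos = finrank ℝ Wp := by omega
  have e2 : Γ.nNeg = finrank ℝ Wn := by omega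
  have e3 : Γ.nZero = finrank ℝ Wz := by omega
  simp [WSG.inertia, e1, e2, e3]

end Count2
section KsubSec

open Module

variable {n : ℕ}

/-- The subspace of vectors that are constant along edges of `H`. -/
def Ksub (H : SimpleGraph (Fin n)) : Submodule ℝ (EuclideanSpace ℝ (Fin n)) where
  carrier := {x | ∀ i j, H.Adj i j → x i = x j}
  add_mem' := fun {a b} ha hb i j h => by
    simp only [PiLp.add_apply, ha i j h, hb i j h]
  zero_mem' := fun i j h => rfl
  smul_mem' := fun c x hx i j h => by
    simp only [PiLp.smul_apply, hx i j h]

lemma mem_Ksub {H : SimpleGraph (Fin n)} {x : EuclideanSpace ℝ (Fin n)} :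
    x ∈ Ksub H ↔ ∀ i j, H.Adj i j → x i = x j := Iff.rfl

lemma Ksub_inf (G : SignedGraph n) :
    Ksub G.pos ⊓ Ksub G.neg = Ksub G.graph := by
  ext x
  simp only [Submodule.mem_inf, mem_Ksub, SignedGraph.graph]
  constructor
  · rintro ⟨h1, h2⟩ i j hij
    rcases hij with h | h
    · exact h1 i j h
    · exact h2 i j h
  · intro h
    exact ⟨fun i j hij => h i j (Or.inl hij), fun i j hij => h i j (Or.inr hij)⟩

lemma Ksub_graph_le_pos (G : SignedGraph n) : Ksub G.graph ≤ Ksub G.pos := by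
  intro x hx i j hij
  exact hx i j (Or.inl hij)

lemma Ksub_graph_le_neg (G : SignedGraph n) : Ksub G.graph ≤ Ksub G.neg := by
  intro x hx i j hij
  exact hx i j (Or.inr hij)

lemma consistent_w_pos {G : SignedGraph n} {Γ : WSG n} (hc : Consistent G Γ)
    {i j : Fin n} (h : G.pos.Adj i j) : 0 < Γ.w i j := by
  rw [← hc.1] at h
  obtain ⟨hne, h1 | h1⟩ := h
  · exact h1
  · rw [← wsymm]; exact h1

lemma consistent_w_neg {G : SignedGraph n} {Γ : WSG n} (hc : Consistent G Γ)
    {i j : Fin n} (h : G.neg.Adj i j) : Γ.w i j < 0 := by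
  rw [← hc.2] at h
  obtain ⟨hne, h1 | h1⟩ := h
  · exact h1
  · rw [← wsymm]; exact h1

lemma consistent_pos_of_w {G : SignedGraph n} {Γ : WSG n} (hc : Consistent G Γ)
    {i j : Fin n} (h : 0 < Γ.w i j) : G.pos.Adj i j := by
  rw [← hc.1]
  refine ⟨fun he => ?_, Or.inl h⟩
  rw [he] at h
  exact absurd (Γ.loopless j) (ne_of_gt h)

lemma consistent_neg_of_w {G : SignedGraph n} {Γ : WSG n} (hc : Consistent G Γ)
    {i j : Fin n} (h : Γ.w i j < 0) : G.neg.Adj i j := by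
  rw [← hc.2]
  refine ⟨fun he => ?_, Or.inl h⟩
  rw [he] at h
  exact absurd (Γ.loopless j) (ne_of_lt h)

lemma lap_mulVec_zero {G : SignedGraph n} {Γ : WSG n} (hc : Consistent G Γ)
    {x : EuclideanSpace ℝ (Fin n)} (hx : x ∈ Ksub G.graph) :
    Γ.lap.mulVec x = 0 := by
  funext i
  have h : Γ.lap.mulVec x i = ∑ j, Γ.w i j * (x j - x i) := by
    simp [Matrix.mulVec, dotProduct, WSG.lap, Matrix.sub_apply,
      Matrix.diagonal_apply, Finset.sum_sub_distrib, sub_mul, ite_mul,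
      mul_sub, Finset.sum_mul]
  rw [h]
  have : ∀ j, Γ.w i j * (x j - x i) = 0 := by
    intro j
    rcases lt_trichotomy (Γ.w i j) 0 with hw | hw | hw
    · have : x i = x j := hx i j (Or.inr (consistent_neg_of_w hc hw))
      rw [this]; ring
    · rw [hw]; ring
    · have : x i = x j := hx i j (Or.inl (consistent_pos_of_w hc hw))
      rw [this]; ring
  simp only [this, Finset.sum_const_zero, Pi.zero_apply]

lemma double_sum_zero {f : Fin n → Fin n → ℝ} (h : ∀ i j, f i j ≤ 0)
    (h0 : ∑ i, ∑ j, f i j = 0) : ∀ i j, f i j = 0 := by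
  intro i j
  have hinner : ∀ k, ∑ l, f k l ≤ 0 := fun k =>
    Finset.sum_nonpos fun l _ => h k l
  have h1 : ∑ l, f i l = 0 := by
    have := (Finset.sum_eq_zero_iff_of_nonpos (fun k _ => hinner k)).mp h0
    exact this i (Finset.mem_univ i)
  have := (Finset.sum_eq_zero_iff_of_nonpos (fun l _ => h i l)).mp h1
  exact this j (Finset.mem_univ j)

lemma qf_sign_posConst {G : SignedGraph n} {Γ : WSG n} (hc : Consistent G Γ)
    {x : EuclideanSpace ℝ (Fin n)} (hx : x ∈ Ksub G.pos) :
    0 ≤ qf Γ x ∧ (qf Γ x = 0 → x ∈ Ksub G.neg) := by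
  have hterm : ∀ i j, Γ.w i j * (x i - x j) ^ 2 ≤ 0 := by
    intro i j
    rcases lt_trichotomy (Γ.w i j) 0 with hw | hw | hw
    · nlinarith [sq_nonneg (x i - x j)]
    · rw [hw]; simp
    · have : x i = x j := hx i j (consistent_pos_of_w hc hw)
      rw [this]; simp
  have heqs : eqs Γ.w x ≤ 0 :=
    Finset.sum_nonpos fun i _ => Finset.sum_nonpos fun j _ => hterm i j
  constructor
  · rw [qf_eq]; nlinarith
  · intro h0
    rw [qf_eq] at h0
    have heq0 : eqs Γ.w x = 0 := by linarith
    have := double_sum_zero hterm heq0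
    intro i j hij
    have hw := consistent_w_neg hc hij
    have := this i j
    have hsq : (x i - x j) ^ 2 = 0 := by
      rcases mul_eq_zero.mp this with h | h
      · exact absurd h (ne_of_lt hw)
      · exact h
    have := pow_eq_zero_iff (n := 2) (by norm_num) |>.mp hsq
    linarith [sub_eq_zero.mp this]

lemma qf_sign_negConst {G : SignedGraph n} {Γ : WSG n} (hc : Consistent G Γ)
    {x : EuclideanSpace ℝ (Fin n)} (hx : x ∈ Ksub G.neg) :
    qf Γ x ≤ 0 ∧ (qf Γ x = 0 → x ∈ Ksub G.pos) := by
  have hterm : ∀ i j, 0 ≤ Γ.w i j * (x i - x j) ^ 2 := by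
    intro i j
    rcases lt_trichotomy (Γ.w i j) 0 with hw | hw | hw
    · have : x i = x j := hx i j (consistent_neg_of_w hc hw)
      rw [this]; simp
    · rw [hw]; simp
    · nlinarith [sq_nonneg (x i - x j)]
  have heqs : 0 ≤ eqs Γ.w x :=
    Finset.sum_nonneg fun i _ => Finset.sum_nonneg fun j _ => hterm i j
  constructor
  · rw [qf_eq]; nlinarith
  · intro h0
    rw [qf_eq] at h0
    have heq0 : eqs Γ.w x = 0 := by linarith
    have hterm' : ∀ i j, -(Γ.w i j * (x i - x j) ^ 2) ≤ 0 := fun i j => by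
      linarith [hterm i j]
    have heq0' : ∑ i, ∑ j, -(Γ.w i j * (x i - x j) ^ 2) = 0 := by
      simp only [Finset.sum_neg_distrib]
      rw [show (∑ i, ∑ j, Γ.w i j * (x i - x j) ^ 2) = eqs Γ.w x from rfl, heq0]
      ring
    have hzero := double_sum_zero hterm' heq0'
    intro i j hij
    have hw := consistent_w_pos hc hij
    have h2 : Γ.w i j * (x i - x j) ^ 2 = 0 := by linarith [hzero i j]
    have hsq : (x i - x j) ^ 2 = 0 := by
      rcases mul_eq_zero.mp h2 with h | h
      · exact absurd h (ne_of_gt hw)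
      · exact h
    have := pow_eq_zero_iff (n := 2) (by norm_num) |>.mp hsq
    linarith [sub_eq_zero.mp this]

end KsubSec
section InertiaFormulas

open Module

variable {n : ℕ}

/-- Dimension abbreviations. -/
noncomputable def kP (G : SignedGraph n) : ℕ := finrank ℝ (Ksub G.pos)
noncomputable def kN (G : SignedGraph n) : ℕ := finrank ℝ (Ksub G.neg)
noncomputable def kK (G : SignedGraph n) : ℕ := finrank ℝ (Ksub G.graph)
noncomputable def aP (G : SignedGraph n) : ℕ :=
  finrank ℝ ((Ksub G.graph)ᗮ ⊓ Ksub G.pos : Submodule ℝ (EuclideanSpace ℝ (Fin n)))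
noncomputable def aN (G : SignedGraph n) : ℕ :=
  finrank ℝ ((Ksub G.graph)ᗮ ⊓ Ksub G.neg : Submodule ℝ (EuclideanSpace ℝ (Fin n)))
noncomputable def bP (G : SignedGraph n) : ℕ :=
  finrank ℝ ((Ksub G.pos)ᗮ : Submodule ℝ (EuclideanSpace ℝ (Fin n)))
noncomputable def bN (G : SignedGraph n) : ℕ :=
  finrank ℝ ((Ksub G.neg)ᗮ : Submodule ℝ (EuclideanSpace ℝ (Fin n)))

lemma qf_pos_on {G : SignedGraph n} {Γ : WSG n} (hc : Consistent G Γ) :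
    ∀ x ∈ ((Ksub G.graph)ᗮ ⊓ Ksub G.pos : Submodule ℝ (EuclideanSpace ℝ (Fin n))),
      x ≠ 0 → 0 < qf Γ x := by
  rintro x ⟨hxo, hxp⟩ hx0
  obtain ⟨hge, heq⟩ := qf_sign_posConst hc hxp
  rcases lt_or_eq_of_le hge with h | h
  · exact h
  · exfalso
    have hxn : x ∈ Ksub G.neg := heq h.symm
    have hxK : x ∈ Ksub G.graph := by
      rw [← Ksub_inf]; exact ⟨hxp, hxn⟩
    have : x ∈ Ksub G.graph ⊓ (Ksub G.graph)ᗮ := ⟨hxK, hxo⟩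
    rw [Submodule.inf_orthogonal_eq_bot] at this
    exact hx0 this

lemma qf_neg_on {G : SignedGraph n} {Γ : WSG n} (hc : Consistent G Γ) :
    ∀ x ∈ ((Ksub G.graph)ᗮ ⊓ Ksub G.neg : Submodule ℝ (EuclideanSpace ℝ (Fin n))),
      x ≠ 0 → qf Γ x < 0 := by
  rintro x ⟨hxo, hxn⟩ hx0
  obtain ⟨hle, heq⟩ := qf_sign_negConst hc hxn
  rcases lt_or_eq_of_le hle with h | h
  · exact h
  · exfalso
    have hxp : x ∈ Ksub G.pos := heq h
    have hxK : x ∈ Ksub G.graph := by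
      rw [← Ksub_inf]; exact ⟨hxp, hxn⟩
    have : x ∈ Ksub G.graph ⊓ (Ksub G.graph)ᗮ := ⟨hxK, hxo⟩
    rw [Submodule.inf_orthogonal_eq_bot] at this
    exact hx0 this

lemma dim_inf_orth_pos (G : SignedGraph n) : kK G + aP G = kP G :=
  Submodule.finrank_add_inf_finrank_orthogonal (Ksub_graph_le_pos G)

lemma dim_inf_orth_neg (G : SignedGraph n) : kK G + aN G = kN G :=
  Submodule.finrank_add_inf_finrank_orthogonal (Ksub_graph_le_neg G)

lemma dim_orth_pos (G : SignedGraph n) : kP G + bP G = n := by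
  have := Submodule.finrank_add_finrank_orthogonal (Ksub G.pos)
  simpa [kP, bP, finrank_euclideanSpace] using this

lemma dim_orth_neg (G : SignedGraph n) : kN G + bN G = n := by
  have := Submodule.finrank_add_finrank_orthogonal (Ksub G.neg)
  simpa [kN, bN, finrank_euclideanSpace] using this

lemma dim_sup_eq (G : SignedGraph n) :
    finrank ℝ ((Ksub G.pos) ⊔ (Ksub G.neg) : Submodule ℝ (EuclideanSpace ℝ (Fin n)))
      + kK G = kP G + kN G := by
  rw [kK, ← Ksub_inf G]
  exact Submodule.finrank_sup_add_finrank_inf_eq _ _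

/-- Under additivity, every consistent weighting has the same inertia. -/
lemma inertia_of_additive (G : SignedGraph n)
    (hadd : Ksub G.pos ⊔ Ksub G.neg = (⊤ : Submodule ℝ (EuclideanSpace ℝ (Fin n))))
    (Γ : WSG n) (hc : Consistent G Γ) :
    Γ.inertia = (aP G, aN G, kK G) := by
  have key := inertia_eq_of_subspaces Γ _ _ _ (qf_pos_on hc) (qf_neg_on hc)
    (fun x hx => lap_mulVec_zero hc hx) ?_
  · exact key
  have h1 := dim_inf_orth_pos G
  have h2 := dim_inf_orth_neg G
  have h3 := dim_sup_eq G
  rw [hadd] at h3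
  have h4 : finrank ℝ (⊤ : Submodule ℝ (EuclideanSpace ℝ (Fin n))) = n := by
    rw [finrank_top]; simp [finrank_euclideanSpace]
  rw [h4] at h3
  have h5 := dim_orth_pos G
  have h6 := dim_orth_neg G
  show aP G + aN G + kK G = n
  omega

end InertiaFormulas
section Extreme

open Module

variable {n : ℕ}

/-- Indicator matrix of a graph. -/
noncomputable def indw (H : SimpleGraph (Fin n)) : Matrix (Fin n) (Fin n) ℝ :=
  fun i j => if H.Adj i j then 1 else 0

lemma eqs_indw_nonneg (H : SimpleGraph (Fin n)) (x : Fin n → ℝ) :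
    0 ≤ eqs (indw H) x := by
  refine Finset.sum_nonneg fun i _ => Finset.sum_nonneg fun j _ => ?_
  unfold indw
  split <;> [nlinarith [sq_nonneg (x i - x j)]; simp]

lemma eqs_indw_eq_zero_iff (H : SimpleGraph (Fin n)) (x : EuclideanSpace ℝ (Fin n)) :
    eqs (indw H) x = 0 ↔ x ∈ Ksub H := by
  constructor
  · intro h0
    have hterm : ∀ i j, -(indw H i j * (x i - x j) ^ 2) ≤ 0 := by
      intro i j
      unfold indw
      split <;> [nlinarith [sq_nonneg (x i - x j)]; simp]
    have h0' : ∑ i, ∑ j, -(indw H i j * (x i - x j) ^ 2) = 0 := by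
      simp only [Finset.sum_neg_distrib]
      rw [show (∑ i, ∑ j, indw H i j * (x i - x j) ^ 2) = eqs (indw H) x from rfl, h0]
      ring
    have hz := double_sum_zero hterm h0'
    intro i j hij
    have := hz i j
    rw [show indw H i j = 1 from if_pos hij] at this
    have hsq : (x i - x j) ^ 2 = 0 := by linarith
    have := pow_eq_zero_iff (n := 2) (by norm_num) |>.mp hsq
    linarith [sub_eq_zero.mp this]
  · intro hx
    refine Finset.sum_eq_zero fun i _ => Finset.sum_eq_zero fun j _ => ?_
    unfold indw
    split
    · rename_i h
      rw [hx i j h]; ring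
    · ring

lemma eqs_homog (w : Matrix (Fin n) (Fin n) ℝ) (c : ℝ) (x : EuclideanSpace ℝ (Fin n)) :
    eqs w (c • x) = c ^ 2 * eqs w x := by
  unfold eqs
  rw [Finset.mul_sum]
  refine Finset.sum_congr rfl fun i _ => ?_
  rw [Finset.mul_sum]
  refine Finset.sum_congr rfl fun j _ => ?_
  have h1 : (c • x.ofLp) i = c * x i := rfl
  have h2 : (c • x.ofLp) j = c * x j := rfl
  rw [h1, h2]; ring

lemma eqs_continuous (w : Matrix (Fin n) (Fin n) ℝ) :
    Continuous fun x : EuclideanSpace ℝ (Fin n) => eqs w x := by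
  unfold eqs
  refine continuous_finset_sum _ fun i _ => continuous_finset_sum _ fun j _ => ?_
  have hi : Continuous fun x : EuclideanSpace ℝ (Fin n) => x i :=
    (continuous_apply i).comp (PiLp.continuous_ofLp 2 _)
  have hj : Continuous fun x : EuclideanSpace ℝ (Fin n) => x j :=
    (continuous_apply j).comp (PiLp.continuous_ofLp 2 _)
  continuity

/-- A standard weighting. -/
noncomputable def stdWSG (G : SignedGraph n) (a b : ℝ) : WSG n where
  w := fun i j => if G.pos.Adj i j then a else if G.neg.Adj i j then -b else 0
  symm := by
    unfold Matrix.IsSymm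
    ext i j
    change (if G.pos.Adj j i then a else if G.neg.Adj j i then -b else 0) = _
    by_cases hp : G.pos.Adj i j
    · rw [if_pos hp, if_pos (hp.symm)]
    · rw [if_neg hp, if_neg (fun h => hp h.symm)]
      by_cases hn : G.neg.Adj i j
      · rw [if_pos hn, if_pos hn.symm]
      · rw [if_neg hn, if_neg (fun h => hn h.symm)]
  loopless := fun i => by simp

lemma stdWSG_consistent (G : SignedGraph n) {a b : ℝ} (ha : 0 < a) (hb : 0 < b) :
    Consistent G (stdWSG G a b) := by
  have hw : ∀ i j, 0 < (stdWSG G a b).w i j ↔ G.pos.Adj i j := by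
    intro i j
    show 0 < (if G.pos.Adj i j then a else if G.neg.Adj i j then -b else 0) ↔ _
    by_cases hp : G.pos.Adj i j
    · simp [hp, ha]
    · rw [if_neg hp]
      by_cases hn : G.neg.Adj i j
      · simp [hp, hn]; linarith
      · simp [hp, hn]
  have hw' : ∀ i j, (stdWSG G a b).w i j < 0 ↔ G.neg.Adj i j := by
    intro i j
    show (if G.pos.Adj i j then a else if G.neg.Adj i j then -b else 0) < 0 ↔ _
    by_cases hp : G.pos.Adj i j
    · have : ¬ G.neg.Adj i j := fun h => G.disj i j ⟨hp, h⟩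
      simp [hp, this]; linarith
    · rw [if_neg hp]
      by_cases hn : G.neg.Adj i j
      · simp [hn]; linarith
      · simp [hp, hn]
  constructor
  · ext i j
    simp only [WSG.posGraph, SimpleGraph.fromRel_adj]
    constructor
    · rintro ⟨hne, h | h⟩
      · exact (hw i j).mp h
      · exact ((hw j i).mp h).symm
    · intro h
      exact ⟨h.ne, Or.inl ((hw i j).mpr h)⟩
  · ext i j
    simp only [WSG.negGraph, SimpleGraph.fromRel_adj]
    constructor
    · rintro ⟨hne, h | h⟩
      · exact (hw' i j).mp h
      · exact ((hw' j i).mp h).symm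
    · intro h
      exact ⟨h.ne, Or.inl ((hw' i j).mpr h)⟩

lemma stdWSG_w_eq (G : SignedGraph n) (a b : ℝ) :
    (stdWSG G a b).w = fun i j => a * indw G.pos i j - b * indw G.neg i j := by
  funext i j
  show (if G.pos.Adj i j then a else if G.neg.Adj i j then -b else 0) = _
  unfold indw
  by_cases hp : G.pos.Adj i j
  · have : ¬ G.neg.Adj i j := fun h => G.disj i j ⟨hp, h⟩
    simp [hp, this]
  · by_cases hn : G.neg.Adj i j
    · simp [hp, hn]
    · simp [hp, hn]

lemma eqs_lin (a b : ℝ) (p q : Matrix (Fin n) (Fin n) ℝ) (x : Fin n → ℝ) :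
    eqs (fun i j => a * p i j - b * q i j) x = a * eqs p x - b * eqs q x := by
  unfold eqs
  rw [Finset.mul_sum, Finset.mul_sum, ← Finset.sum_sub_distrib]
  refine Finset.sum_congr rfl fun i _ => ?_
  rw [Finset.mul_sum, Finset.mul_sum, ← Finset.sum_sub_distrib]
  refine Finset.sum_congr rfl fun j _ => ?_
  ring

lemma qf_stdWSG (G : SignedGraph n) (a b : ℝ) (x : EuclideanSpace ℝ (Fin n)) :
    qf (stdWSG G a b) x
      = -(1/2) * (a * eqs (indw G.pos) x - b * eqs (indw G.neg) x) := by
  rw [qf_eq, stdWSG_w_eq, eqs_lin]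

/-- Compactness: a uniformly small multiplier. -/
lemma exists_small_ratio (p q : Matrix (Fin n) (Fin n) ℝ)
    (W : Submodule ℝ (EuclideanSpace ℝ (Fin n)))
    (hq0 : ∀ x : EuclideanSpace ℝ (Fin n), 0 ≤ eqs q x)
    (hpos : ∀ x ∈ W, x ≠ 0 → 0 < eqs p x) :
    ∃ t : ℝ, 0 < t ∧ ∀ x ∈ W, x ≠ 0 → t * eqs q x < eqs p x := by
  by_cases hbot : W = ⊥
  · exact ⟨1, one_pos, fun x hx hx0 => absurd (by rwa [hbot, Submodule.mem_bot] at hx) hx0⟩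
  obtain ⟨x₀, hx₀W, hx₀0⟩ := Submodule.exists_mem_ne_zero_of_ne_bot hbot
  set S : Set (EuclideanSpace ℝ (Fin n)) := Metric.sphere 0 1 ∩ (W : Set _) with hS
  have hScompact : IsCompact S :=
    (isCompact_sphere 0 1).inter_right (Submodule.closed_of_finiteDimensional W)
  have hSne : S.Nonempty := by
    refine ⟨‖x₀‖⁻¹ • x₀, ?_, Submodule.smul_mem W _ hx₀W⟩
    simp [norm_smul, norm_ne_zero_iff.mpr hx₀0, abs_of_nonneg (inv_nonneg.mpr (norm_nonneg x₀)),
      inv_mul_cancel₀ (norm_ne_zero_iff.mpr hx₀0)]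
  obtain ⟨u₀, hu₀S, hmin'⟩ := hScompact.exists_isMinOn hSne
    ((eqs_continuous p).continuousOn)
  obtain ⟨u₁, hu₁S, hmax'⟩ := hScompact.exists_isMaxOn hSne
    ((eqs_continuous q).continuousOn)
  have hmin : ∀ y ∈ S, eqs p u₀ ≤ eqs p y := fun y hy => hmin' hy
  have hmax : ∀ y ∈ S, eqs q y ≤ eqs q u₁ := fun y hy => hmax' hy
  set δ := eqs p u₀ with hδ
  set M := eqs q u₁ with hM
  have hu₀0 : u₀ ≠ 0 := by
    intro h
    have := hu₀S.1
    rw [h] at this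
    simp at this
  have hδpos : 0 < δ := hpos u₀ hu₀S.2 hu₀0
  have hMlt : M < M + 1 := by linarith
  have hM0 : 0 ≤ M := hq0 u₁
  have hM1pos : 0 < M + 1 := by linarith
  refine ⟨δ / (M + 1), div_pos hδpos hM1pos, ?_⟩
  intro x hxW hx0
  set c := ‖x‖ with hc
  have hcpos : 0 < c := norm_pos_iff.mpr hx0
  set u := c⁻¹ • x with hu
  have huS : u ∈ S := by
    constructor
    · have : ‖u‖ = 1 := by
        rw [hu, norm_smul, norm_inv, norm_norm, ← hc, inv_mul_cancel₀ (ne_of_gt hcpos)]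
      simpa using this
    · exact Submodule.smul_mem W _ hxW
  have hxu : x = c • u := by
    rw [hu, smul_smul, mul_inv_cancel₀ (ne_of_gt hcpos), one_smul]
  have h1 : eqs p x = c ^ 2 * eqs p u := by rw [hxu, WithLp.ofLp_smul, eqs_homog]
  have h2 : eqs q x = c ^ 2 * eqs q u := by rw [hxu, WithLp.ofLp_smul, eqs_homog]
  have h3 : δ ≤ eqs p u := hmin u huS
  have h4 : eqs q u ≤ M := hmax u huS
  rw [h1, h2]
  have hc2 : 0 < c ^ 2 := by positivity
  have key : δ / (M + 1) * eqs q u < eqs p u := by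
    have hq : δ / (M + 1) * eqs q u ≤ δ / (M + 1) * M := by
      apply mul_le_mul_of_nonneg_left h4 (le_of_lt (div_pos hδpos hM1pos))
    have : δ / (M + 1) * M < δ := by
      rw [div_mul_eq_mul_div, div_lt_iff₀ hM1pos]
      nlinarith
    linarith
  calc δ / (M + 1) * (c ^ 2 * eqs q u) = c ^ 2 * (δ / (M + 1) * eqs q u) := by ring
    _ < c ^ 2 * eqs p u := by
        exact (mul_lt_mul_iff_right₀ hc2).mpr key

end Extreme
section ExtremeInertia

open Module

variable {n : ℕ}

lemma eqs_pos_on_orth (H : SimpleGraph (Fin n)) :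
    ∀ x ∈ (Ksub H)ᗮ, x ≠ 0 → 0 < eqs (indw H) x := by
  intro x hx hx0
  rcases lt_or_eq_of_le (eqs_indw_nonneg H x) with h | h
  · exact h
  · exfalso
    have hxK : x ∈ Ksub H := (eqs_indw_eq_zero_iff H x).mp h.symm
    have : x ∈ Ksub H ⊓ (Ksub H)ᗮ := ⟨hxK, hx⟩
    rw [Submodule.inf_orthogonal_eq_bot] at this
    exact hx0 this

lemma inertia_small_neg (G : SignedGraph n) :
    ∃ Γ : WSG n, Consistent G Γ ∧ Γ.inertia = (aP G, bP G, kK G) := by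
  obtain ⟨t, ht, hlt⟩ := exists_small_ratio (indw G.pos) (indw G.neg) (Ksub G.pos)ᗮ
    (fun x => eqs_indw_nonneg _ x) (eqs_pos_on_orth G.pos)
  have hc := stdWSG_consistent G one_pos ht
  refine ⟨stdWSG G 1 t, hc, ?_⟩
  have key := inertia_eq_of_subspaces (stdWSG G 1 t)
    ((Ksub G.graph)ᗮ ⊓ Ksub G.pos) ((Ksub G.pos)ᗮ) (Ksub G.graph)
    (qf_pos_on hc) ?_ (fun x hx => lap_mulVec_zero hc hx) ?_
  · exact key
  · intro x hx hx0
    rw [qf_stdWSG]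
    have := hlt x hx hx0
    linarith
  · have h1 := dim_inf_orth_pos G
    have h2 := dim_orth_pos G
    show aP G + bP G + kK G = n
    omega

lemma inertia_small_pos (G : SignedGraph n) :
    ∃ Γ : WSG n, Consistent G Γ ∧ Γ.inertia = (bN G, aN G, kK G) := by
  obtain ⟨t, ht, hlt⟩ := exists_small_ratio (indw G.neg) (indw G.pos) (Ksub G.neg)ᗮ
    (fun x => eqs_indw_nonneg _ x) (eqs_pos_on_orth G.neg)
  have hc := stdWSG_consistent G ht one_pos
  refine ⟨stdWSG G t 1, hc, ?_⟩
  have key := inertia_eq_of_subspaces (stdWSG G t 1)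
    ((Ksub G.neg)ᗮ) ((Ksub G.graph)ᗮ ⊓ Ksub G.neg) (Ksub G.graph)
    ?_ (qf_neg_on hc) (fun x hx => lap_mulVec_zero hc hx) ?_
  · exact key
  · intro x hx hx0
    rw [qf_stdWSG]
    have := hlt x hx hx0
    linarith
  · have h1 := dim_inf_orth_neg G
    have h2 := dim_orth_neg G
    show bN G + aN G + kK G = n
    omega

/-- If the inertia is unique, additivity holds. -/
lemma additive_of_unique (G : SignedGraph n) (T : ℕ × ℕ × ℕ)
    (hU : HasUniqueInertia G T) :
    Ksub G.pos ⊔ Ksub G.neg = (⊤ : Submodule ℝ (EuclideanSpace ℝ (Fin n))) := by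
  obtain ⟨Γ₁, hc₁, hi₁⟩ := inertia_small_neg G
  obtain ⟨Γ₂, hc₂, hi₂⟩ := inertia_small_pos G
  have h1 : (aP G, bP G, kK G) = T := hi₁ ▸ hU Γ₁ hc₁
  have h2 : (bN G, aN G, kK G) = T := hi₂ ▸ hU Γ₂ hc₂
  have h3 : aP G = bN G := by
    rw [← h2] at h1
    exact congrArg Prod.fst h1
  have h4 := dim_inf_orth_pos G
  have h5 := dim_orth_neg G
  have h6 := dim_sup_eq G
  have h7 : finrank ℝ ((Ksub G.pos) ⊔ (Ksub G.neg) :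
      Submodule ℝ (EuclideanSpace ℝ (Fin n))) = n := by omega
  apply Submodule.eq_top_of_finrank_eq
  rw [h7]
  simp [finrank_euclideanSpace]
end ExtremeInertia
section ReachSec

variable {n : ℕ}

/-- Reachability within a vertex set. -/
def ReachIn (G : SimpleGraph (Fin n)) (U : Set (Fin n)) (i j : Fin n) : Prop :=
  Relation.ReflTransGen (fun a b => a ∈ U ∧ b ∈ U ∧ G.Adj a b) i j

lemma reachIn_symmetric (G : SimpleGraph (Fin n)) (U : Set (Fin n)) :
    Symmetric (ReachIn G U) := by
  intro i j h
  induction h with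
  | refl => exact Relation.ReflTransGen.refl
  | tail _ hbc ih => exact Relation.ReflTransGen.head ⟨hbc.2.1, hbc.1, hbc.2.2.symm⟩ ih

lemma reachIn_trans {G : SimpleGraph (Fin n)} {U : Set (Fin n)} {i j k : Fin n} :
    ReachIn G U i j → ReachIn G U j k → ReachIn G U i k :=
  Relation.ReflTransGen.trans

lemma reachIn_mono {G : SimpleGraph (Fin n)} {U V : Set (Fin n)} (hUV : U ⊆ V)
    {i j : Fin n} (h : ReachIn G U i j) : ReachIn G V i j := by
  induction h with
  | refl => exact Relation.ReflTransGen.refl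
  | tail _ hbc ih => exact ih.tail ⟨hUV hbc.1, hUV hbc.2.1, hbc.2.2⟩

lemma reachIn_of_walk {G : SimpleGraph (Fin n)} {U : Set (Fin n)}
    (a b : ↥U) (w : (G.induce U).Walk a b) : ReachIn G U ↑a ↑b := by
  induction w with
  | nil => exact Relation.ReflTransGen.refl
  | @cons u v _ h p ih =>
    exact Relation.ReflTransGen.head ⟨u.2, v.2, h⟩ ih

lemma reachIn_of_preconnected {G : SimpleGraph (Fin n)} {U : Set (Fin n)}
    (h : (G.induce U).Preconnected) {i j : Fin n} (hi : i ∈ U) (hj : j ∈ U) :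
    ReachIn G U i j := by
  obtain ⟨w⟩ := h ⟨i, hi⟩ ⟨j, hj⟩
  exact reachIn_of_walk _ _ w

lemma walk_of_reachIn {G : SimpleGraph (Fin n)} {U : Set (Fin n)}
    {i j : Fin n} (h : ReachIn G U i j) :
    ∀ (hi : i ∈ U) (hj : j ∈ U), (G.induce U).Reachable ⟨i, hi⟩ ⟨j, hj⟩ := by
  induction h with
  | refl => intro hi hj; rfl
  | @tail b c hab hbc ih =>
    intro hi hj
    refine (ih hi hbc.1).trans (SimpleGraph.Adj.reachable ?_)
    exact hbc.2.2

lemma preconnected_of_reachIn {G : SimpleGraph (Fin n)} {U : Set (Fin n)}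
    (h : ∀ i ∈ U, ∀ j ∈ U, ReachIn G U i j) :
    (G.induce U).Preconnected := by
  rintro ⟨i, hi⟩ ⟨j, hj⟩
  exact walk_of_reachIn (h i hi j hj) hi hj

end ReachSec
section MixedBlock

variable {n : ℕ}

lemma switch_vertex (G : SignedGraph n) {B : Set (Fin n)}
    (hconn : (G.graph.induce B).Connected)
    {u v s t : Fin n} (hu : u ∈ B) (hv : v ∈ B) (hs : s ∈ B) (ht : t ∈ B)
    (hpos : G.pos.Adj u v) (hneg : G.neg.Adj s t) :
    ∃ w ∈ B, ∃ a ∈ B, ∃ b ∈ B, G.pos.Adj w a ∧ G.neg.Adj w b := by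
  have hr : ReachIn G.graph B u s :=
    reachIn_of_preconnected hconn.preconnected hu hs
  have main : ∀ x, ReachIn G.graph B x s → x ∈ B → (∃ a ∈ B, G.pos.Adj x a) →
      ∃ w ∈ B, ∃ a ∈ B, ∃ b ∈ B, G.pos.Adj w a ∧ G.neg.Adj w b := by
    intro x hx
    induction hx using Relation.ReflTransGen.head_induction_on with
    | refl =>
      intro hsB ⟨a, ha, hadj⟩
      exact ⟨s, hsB, a, ha, t, ht, hadj, hneg⟩
    | head hstep _ ih =>
      rename_i x' c _
      intro hx' ⟨a, ha, hadj⟩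
      obtain ⟨hxB, hcB, hadj'⟩ := hstep
      rcases hadj' with hp | hn
      · exact ih hcB ⟨x', hx', hp.symm⟩
      · exact ⟨x', hx', a, ha, c, hcB, hadj, hn⟩
  exact main u hr hu ⟨v, hv, hpos⟩

lemma not_additive_of_mixed_block (G : SignedGraph n) {B : Set (Fin n)}
    (h1 : (G.graph.induce B).Connected)
    (h2 : ∀ v, (G.graph.induce (B \ {v})).Preconnected)
    (hp : ∃ i ∈ B, ∃ j ∈ B, G.pos.Adj i j) (hn : ∃ i ∈ B, ∃ j ∈ B, G.neg.Adj i j) :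
    Ksub G.pos ⊔ Ksub G.neg ≠ (⊤ : Submodule ℝ (EuclideanSpace ℝ (Fin n))) := by
  intro htop
  obtain ⟨u, hu, v, hv, hpos⟩ := hp
  obtain ⟨s, hs, t, ht, hneg⟩ := hn
  obtain ⟨w, hw, a, ha, b, hb, hwa, hwb⟩ :=
    switch_vertex G h1 hu hv hs ht hpos hneg
  set ew : EuclideanSpace ℝ (Fin n) := WithLp.toLp 2 (fun z => if z = w then (1:ℝ) else 0) with hew
  have hmem : ew ∈ Ksub G.pos ⊔ Ksub G.neg := by rw [htop]; trivial
  obtain ⟨A, hA, Bv, hBv, hsum⟩ := Submodule.mem_sup.mp hmem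
  have hcoord : ∀ z, A z + Bv z = (if z = w then (1:ℝ) else 0) := by
    intro z
    have := congrArg (fun v : EuclideanSpace ℝ (Fin n) => v z) hsum
    exact this
  -- A is constant along any G.graph-edge avoiding w
  have hstep : ∀ z z', z ≠ w → z' ≠ w → G.graph.Adj z z' → A z = A z' := by
    intro z z' hz hz' hadj
    rcases hadj with hpadj | hnadj
    · exact hA z z' hpadj
    · have h1' := hcoord z
      have h2' := hcoord z'
      rw [if_neg hz] at h1'
      rw [if_neg hz'] at h2'
      have := hBv z z' hnadj
      linarith
  have hreach : ∀ z z', ReachIn G.graph (B \ {w}) z z' → A z = A z' := by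
    intro z z' hzz
    induction hzz with
    | refl => rfl
    | tail _ hbc ih =>
      obtain ⟨⟨_, hb1⟩, ⟨_, hb2⟩, hadj⟩ := hbc
      rw [ih, hstep _ _ (by simpa using hb1) (by simpa using hb2) hadj]
  have haB : a ∈ B \ {w} := ⟨ha, by simp [hwa.ne']⟩
  have hbB : b ∈ B \ {w} := ⟨hb, by simp [hwb.ne']⟩
  have hab : ReachIn G.graph (B \ {w}) a b :=
    reachIn_of_preconnected (h2 w) haB hbB
  have hAab : A a = A b := hreach a b hab
  have e1 : A w = A a := hA w a hwa
  have e2 : Bv w = Bv b := hBv w b hwb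
  have e3 := hcoord w
  have e4 := hcoord b
  rw [if_pos rfl] at e3
  rw [if_neg hwb.ne'] at e4
  linarith

end MixedBlock
section GlueSec

variable {n : ℕ}

/-- A decomposition of the indicator of `p` into locally-constant parts on `U`. -/
def Decomp (G : SignedGraph n) (U : Set (Fin n)) (p : Fin n) (A B : Fin n → ℝ) : Prop :=
  (∀ i ∈ U, ∀ j ∈ U, G.pos.Adj i j → A i = A j) ∧
  (∀ i ∈ U, ∀ j ∈ U, G.neg.Adj i j → B i = B j) ∧
  ∀ i ∈ U, A i + B i = if i = p then (1:ℝ) else 0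

lemma glue (G : SignedGraph n) {S T U : Set (Fin n)} {w p : Fin n}
    (hST : U = S ∪ T) (hwS : w ∈ S) (hwT : w ∈ T) (hpS : p ∈ S)
    (hcross : ∀ z ∈ S, ∀ z' ∈ T, z ≠ w → z' ≠ w → ¬ G.graph.Adj z z')
    (hTS : ∀ z ∈ T, z ≠ w → z ∉ S)
    (h₁ : ∃ A B, Decomp G S p A B) (h₂ : ∃ A B, Decomp G T w A B) :
    ∃ A B, Decomp G U p A B := by
  classical
  obtain ⟨A₁, B₁, hA₁, hB₁, hs₁⟩ := h₁
  obtain ⟨A₂, B₂, hA₂, hB₂, hs₂⟩ := h₂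
  set δ : ℝ := if w = p then 1 else 0 with hδ
  set c : ℝ := A₁ w - δ * A₂ w with hc
  refine ⟨fun z => if z ∈ S then A₁ z else δ * A₂ z + c,
          fun z => if z ∈ S then B₁ z else δ * B₂ z - c, ?_, ?_, ?_⟩
  · -- A is constant on positive edges of U
    intro i hi j hj hadj
    rcases Classical.em (i ∈ S) with hiS | hiS <;>
      rcases Classical.em (j ∈ S) with hjS | hjS
    · simp only [if_pos hiS, if_pos hjS]
      exact hA₁ i hiS j hjS hadj
    · -- j ∈ T \ S
      have hjT : j ∈ T := by
        rcases (hST ▸ hj) with h | h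
        · exact absurd h hjS
        · exact h
      have hjw : j ≠ w := fun h => hjS (h ▸ hwS)
      by_cases hiw : i = w
      · subst hiw
        simp only [if_pos hiS, if_neg hjS]
        have h1 : A₂ i = A₂ j := hA₂ i hwT j hjT hadj
        rw [hc, ← h1]
        ring
      · exact absurd (Or.inl hadj : G.graph.Adj i j)
          (hcross i hiS j hjT hiw hjw)
    · -- i ∈ T \ S
      have hiT : i ∈ T := by
        rcases (hST ▸ hi) with h | h
        · exact absurd h hiS
        · exact h
      have hiw : i ≠ w := fun h => hiS (h ▸ hwS)
      by_cases hjw : j = w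
      · subst hjw
        simp only [if_neg hiS, if_pos hjS]
        have h1 : A₂ j = A₂ i := hA₂ j hwT i hiT hadj.symm
        rw [hc, ← h1]
        ring
      · exact absurd (Or.inl hadj.symm : G.graph.Adj j i)
          (hcross j hjS i hiT hjw hiw)
    · -- both in T
      have hiT : i ∈ T := by
        rcases (hST ▸ hi) with h | h
        · exact absurd h hiS
        · exact h
      have hjT : j ∈ T := by
        rcases (hST ▸ hj) with h | h
        · exact absurd h hjS
        · exact h
      simp only [if_neg hiS, if_neg hjS]
      rw [hA₂ i hiT j hjT hadj]
  · -- B is constant on negative edges of U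
    intro i hi j hj hadj
    rcases Classical.em (i ∈ S) with hiS | hiS <;>
      rcases Classical.em (j ∈ S) with hjS | hjS
    · simp only [if_pos hiS, if_pos hjS]
      exact hB₁ i hiS j hjS hadj
    · have hjT : j ∈ T := by
        rcases (hST ▸ hj) with h | h
        · exact absurd h hjS
        · exact h
      have hjw : j ≠ w := fun h => hjS (h ▸ hwS)
      by_cases hiw : i = w
      · subst hiw
        simp only [if_pos hiS, if_neg hjS]
        have h1 : B₂ i = B₂ j := hB₂ i hwT j hjT hadj
        have h2 : A₂ i + B₂ i = 1 := by
          have := hs₂ i hwT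
          rwa [if_pos rfl] at this
        have h3 : A₁ i + B₁ i = δ := by rw [hs₁ i hiS, hδ]
        have h4 : δ * A₂ i + δ * B₂ i = δ := by rw [← mul_add, h2, mul_one]
        rw [hc, ← h1]
        linarith
      · exact absurd (Or.inr hadj : G.graph.Adj i j)
          (hcross i hiS j hjT hiw hjw)
    · have hiT : i ∈ T := by
        rcases (hST ▸ hi) with h | h
        · exact absurd h hiS
        · exact h
      have hiw : i ≠ w := fun h => hiS (h ▸ hwS)
      by_cases hjw : j = w
      · subst hjw
        simp only [if_neg hiS, if_pos hjS]
        have h1 : B₂ j = B₂ i := hB₂ j hwT i hiT hadj.symm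
        have h2 : A₂ j + B₂ j = 1 := by
          have := hs₂ j hwT
          rwa [if_pos rfl] at this
        have h3 : A₁ j + B₁ j = δ := by rw [hs₁ j hjS, hδ]
        have h4 : δ * A₂ j + δ * B₂ j = δ := by rw [← mul_add, h2, mul_one]
        rw [hc, ← h1]
        linarith
      · exact absurd (Or.inr hadj.symm : G.graph.Adj j i)
          (hcross j hjS i hiT hjw hiw)
    · have hiT : i ∈ T := by
        rcases (hST ▸ hi) with h | h
        · exact absurd h hiS
        · exact h
      have hjT : j ∈ T := by
        rcases (hST ▸ hj) with h | h
        · exact absurd h hjS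
        · exact h
      simp only [if_neg hiS, if_neg hjS]
      rw [hB₂ i hiT j hjT hadj]
  · -- the sum condition
    intro i hi
    by_cases hiS : i ∈ S
    · simp only [if_pos hiS]
      exact hs₁ i hiS
    · have hiT : i ∈ T := by
        rcases (hST ▸ hi) with h | h
        · exact absurd h hiS
        · exact h
      have hiw : i ≠ w := fun h => hiS (h ▸ hwS)
      have hip : i ≠ p := fun h => hiS (h ▸ hpS)
      simp only [if_neg hiS, if_neg hip]
      have h1 : A₂ i + B₂ i = 0 := by
        have := hs₂ i hiT
        rwa [if_neg hiw] at this
      have h4 : δ * A₂ i + δ * B₂ i = 0 := by rw [← mul_add, h1, mul_zero]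
      linarith

lemma exists_block_superset {G : SimpleGraph (Fin n)} {C : Set (Fin n)}
    (hconn : (G.induce C).Connected)
    (hnc : ∀ v, (G.induce (C \ {v})).Preconnected) :
    ∃ B, IsBlock G B ∧ C ⊆ B := by
  classical
  set F : Set (Set (Fin n)) := {S | C ⊆ S ∧ (G.induce S).Connected ∧
    ∀ v, (G.induce (S \ {v})).Preconnected} with hF
  have hCF : C ∈ F := ⟨subset_rfl, hconn, hnc⟩
  obtain ⟨B, hBF, hmax⟩ :=
    Set.Finite.exists_maximalFor Set.ncard F (Set.toFinite F) ⟨C, hCF⟩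
  refine ⟨B, ⟨hBF.2.1, hBF.2.2, ?_⟩, hBF.1⟩
  intro B' hsub hconn' hnc'
  have hB'F : B' ∈ F := ⟨hBF.1.trans hsub, hconn', hnc'⟩
  have hle : B.ncard ≤ B'.ncard := Set.ncard_le_ncard hsub (Set.toFinite B')
  have heq : B.ncard = B'.ncard := le_antisymm hle (hmax hB'F hle)
  exact (Set.eq_of_subset_of_ncard_le hsub (le_of_eq heq.symm) (Set.toFinite B')).symm

end GlueSec
section DecompInd

variable {n : ℕ}

theorem decomp_of_no_mixed (G : SignedGraph n)
    (hbl : ∀ C : Set (Fin n), (G.graph.induce C).Connected →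
        (∀ v, (G.graph.induce (C \ {v})).Preconnected) →
        ¬((∃ i ∈ C, ∃ j ∈ C, G.pos.Adj i j) ∧ (∃ i ∈ C, ∃ j ∈ C, G.neg.Adj i j))) :
    ∀ (m : ℕ) (U : Set (Fin n)), U.ncard ≤ m → ∀ p ∈ U, ∃ A B, Decomp G U p A B := by
  intro m
  induction m with
  | zero =>
    intro U hcard p hp
    have hU : U = ∅ := (Set.ncard_eq_zero (Set.toFinite U)).mp (Nat.le_zero.mp hcard)
    rw [hU] at hp
    exact absurd hp (Set.notMem_empty p)
  | succ m ih =>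
    intro U hcard p hp
    by_cases hconn1 : ∀ z ∈ U, ReachIn G.graph U p z
    · by_cases hcut : ∃ w, ∃ i₀ ∈ U \ {w}, ∃ j₀ ∈ U \ {w},
          ¬ ReachIn G.graph (U \ {w}) i₀ j₀
      · -- there is a cut vertex; split the set
        obtain ⟨w, i₀, hi₀, j₀, hj₀, hnr⟩ := hcut
        have hwU : w ∈ U := by
          by_contra hwU
          rw [Set.diff_singleton_eq_self hwU] at hnr
          exact hnr (reachIn_trans (reachIn_symmetric _ _ (hconn1 i₀ hi₀.1))
            (hconn1 j₀ hj₀.1))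
        set S : Set (Fin n) :=
          insert w {z | z ∈ U ∧ z ≠ w ∧ ReachIn G.graph (U \ {w}) z i₀} with hS
        set T : Set (Fin n) :=
          insert w {z | z ∈ U ∧ z ≠ w ∧ ¬ ReachIn G.graph (U \ {w}) z i₀} with hT
        have hSU : S ⊆ U := by
          intro z hz
          rcases Set.mem_insert_iff.mp hz with rfl | hz
          · exact hwU
          · exact hz.1
        have hTU : T ⊆ U := by
          intro z hz
          rcases Set.mem_insert_iff.mp hz with rfl | hz
          · exact hwU
          · exact hz.1
        have hUST : U = S ∪ T := by
          ext z
          constructor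
          · intro hz
            by_cases hzw : z = w
            · exact Or.inl (hzw ▸ Set.mem_insert _ _)
            · by_cases hzr : ReachIn G.graph (U \ {w}) z i₀
              · exact Or.inl (Set.mem_insert_iff.mpr (Or.inr ⟨hz, hzw, hzr⟩))
              · exact Or.inr (Set.mem_insert_iff.mpr (Or.inr ⟨hz, hzw, hzr⟩))
          · rintro (hz | hz)
            · exact hSU hz
            · exact hTU hz
        have hwS : w ∈ S := Set.mem_insert _ _
        have hwT : w ∈ T := Set.mem_insert _ _
        have hcross : ∀ z ∈ S, ∀ z' ∈ T, z ≠ w → z' ≠ w → ¬ G.graph.Adj z z' := by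
          intro z hz z' hz' hzw hz'w hadj
          have hzr : ReachIn G.graph (U \ {w}) z i₀ := by
            rcases Set.mem_insert_iff.mp hz with rfl | hz
            · exact absurd rfl hzw
            · exact hz.2.2
          have hz'r : ¬ ReachIn G.graph (U \ {w}) z' i₀ := by
            rcases Set.mem_insert_iff.mp hz' with rfl | hz'
            · exact absurd rfl hz'w
            · exact hz'.2.2
          apply hz'r
          refine Relation.ReflTransGen.head
            ⟨⟨hTU hz', hz'w⟩, ⟨hSU hz, hzw⟩, hadj.symm⟩ hzr
        have hTSdisj : ∀ z ∈ T, z ≠ w → z ∉ S := by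
          intro z hz hzw hzS
          rcases Set.mem_insert_iff.mp hzS with rfl | hzS
          · exact hzw rfl
          rcases Set.mem_insert_iff.mp hz with rfl | hz
          · exact hzw rfl
          · exact hz.2.2 hzS.2.2
        have hSTdisj : ∀ z ∈ S, z ≠ w → z ∉ T := by
          intro z hz hzw hzT
          rcases Set.mem_insert_iff.mp hz with rfl | hz
          · exact hzw rfl
          rcases Set.mem_insert_iff.mp hzT with rfl | hzT
          · exact hzw rfl
          · exact hzT.2.2 hz.2.2
        have hj₀w : j₀ ≠ w := by
          intro h
          exact (h ▸ hj₀).2 rfl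
        have hi₀w : i₀ ≠ w := by
          intro h
          exact (h ▸ hi₀).2 rfl
        have hj₀S : j₀ ∉ S := by
          intro h
          rcases Set.mem_insert_iff.mp h with rfl | h
          · exact hj₀w rfl
          · exact hnr (reachIn_symmetric _ _ h.2.2)
        have hi₀T : i₀ ∉ T := by
          intro h
          rcases Set.mem_insert_iff.mp h with rfl | h
          · exact hi₀w rfl
          · exact h.2.2 Relation.ReflTransGen.refl
        have hScard : S.ncard ≤ m := by
          have hlt : S.ncard < U.ncard := by
            apply Set.ncard_lt_ncard _ (Set.toFinite U)
            rw [Set.ssubset_iff_subset_ne]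
            exact ⟨hSU, fun h => hj₀S (h ▸ hj₀.1)⟩
          omega
        have hTcard : T.ncard ≤ m := by
          have hlt : T.ncard < U.ncard := by
            apply Set.ncard_lt_ncard _ (Set.toFinite U)
            rw [Set.ssubset_iff_subset_ne]
            exact ⟨hTU, fun h => hi₀T (h ▸ hi₀.1)⟩
          omega
        rcases (hUST ▸ hp : p ∈ S ∪ T) with hpS | hpT
        · exact glue G hUST hwS hwT hpS hcross hTSdisj
            (ih S hScard p hpS) (ih T hTcard w hwT)
        · refine glue G (by rw [hUST, Set.union_comm]) hwT hwS hpT ?_ hSTdisj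
            (ih T hTcard p hpT) (ih S hScard w hwS)
          intro z hz z' hz' h1 h2 hadj
          exact hcross z' hz' z hz h2 h1 hadj.symm
      · -- no cut vertex: the set is uniform
        push_neg at hcut
        have hconn : (G.graph.induce U).Connected := by
          haveI : Nonempty ↥U := ⟨⟨p, hp⟩⟩
          refine ⟨preconnected_of_reachIn ?_⟩
          intro i hi j hj
          exact reachIn_trans (reachIn_symmetric _ _ (hconn1 i hi)) (hconn1 j hj)
        have hnc : ∀ v, (G.graph.induce (U \ {v})).Preconnected := by
          intro v
          apply preconnected_of_reachIn
          intro i hi j hj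
          exact hcut v i hi j hj
        have hmix := hbl U hconn hnc
        by_cases hpe : ∃ i ∈ U, ∃ j ∈ U, G.pos.Adj i j
        · have hne : ¬ ∃ i ∈ U, ∃ j ∈ U, G.neg.Adj i j := fun h => hmix ⟨hpe, h⟩
          refine ⟨fun _ => 0, fun i => if i = p then 1 else 0, ?_, ?_, ?_⟩
          · intro i _ j _ _; rfl
          · intro i hi j hj hadj; exact absurd ⟨i, hi, j, hj, hadj⟩ hne
          · intro i _; rw [zero_add]
        · refine ⟨fun i => if i = p then 1 else 0, fun _ => 0, ?_, ?_, ?_⟩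
          · intro i hi j hj hadj; exact absurd ⟨i, hi, j, hj, hadj⟩ hpe
          · intro i _ j _ _; rfl
          · intro i _; rw [add_zero]
    · -- p's reachable part is a proper subset
      push_neg at hconn1
      obtain ⟨z, hz, hnr⟩ := hconn1
      set U₁ : Set (Fin n) := {z' | z' ∈ U ∧ ReachIn G.graph U p z'} with hU₁
      have hsub : U₁ ⊆ U := fun z' hz' => hz'.1
      have hzU₁ : z ∉ U₁ := fun h => hnr h.2
      have hpU₁ : p ∈ U₁ := ⟨hp, Relation.ReflTransGen.refl⟩
      have hcard₁ : U₁.ncard ≤ m := by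
        have hlt : U₁.ncard < U.ncard := by
          apply Set.ncard_lt_ncard _ (Set.toFinite U)
          rw [Set.ssubset_iff_subset_ne]
          exact ⟨hsub, fun h => hzU₁ (h ▸ hz)⟩
        omega
      obtain ⟨A, B, hA, hB, hs⟩ := ih U₁ hcard₁ p hpU₁
      have hnocross : ∀ i ∈ U₁, ∀ j ∈ U, j ∉ U₁ → ¬ G.graph.Adj i j := by
        intro i hi j hj hjU₁ hadj
        exact hjU₁ ⟨hj, hi.2.tail ⟨hi.1, hj, hadj⟩⟩
      refine ⟨fun z' => if z' ∈ U₁ then A z' else 0,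
              fun z' => if z' ∈ U₁ then B z' else 0, ?_, ?_, ?_⟩
      · intro i hi j hj hadj
        by_cases hiU : i ∈ U₁ <;> by_cases hjU : j ∈ U₁
        · simp only [if_pos hiU, if_pos hjU]; exact hA i hiU j hjU hadj
        · exact absurd (Or.inl hadj) (hnocross i hiU j hj hjU)
        · exact absurd (Or.inl hadj.symm) (hnocross j hjU i hi hiU)
        · simp only [if_neg hiU, if_neg hjU]
      · intro i hi j hj hadj
        by_cases hiU : i ∈ U₁ <;> by_cases hjU : j ∈ U₁
        · simp only [if_pos hiU, if_pos hjU]; exact hB i hiU j hjU hadj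
        · exact absurd (Or.inr hadj) (hnocross i hiU j hj hjU)
        · exact absurd (Or.inr hadj.symm) (hnocross j hjU i hi hiU)
        · simp only [if_neg hiU, if_neg hjU]
      · intro i hi
        by_cases hiU : i ∈ U₁
        · simp only [if_pos hiU]; exact hs i hiU
        · have hip : i ≠ p := fun h => hiU (h ▸ hpU₁)
          simp only [if_neg hiU, if_neg hip]; rw [add_zero]

theorem additive_of_no_mixed_block (G : SignedGraph n)
    (hnb : ∀ B : Set (Fin n), IsBlock G.graph B →
      ¬((∃ i ∈ B, ∃ j ∈ B, G.pos.Adj i j) ∧ (∃ i ∈ B, ∃ j ∈ B, G.neg.Adj i j))) :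
    Ksub G.pos ⊔ Ksub G.neg = (⊤ : Submodule ℝ (EuclideanSpace ℝ (Fin n))) := by
  have hbl : ∀ C : Set (Fin n), (G.graph.induce C).Connected →
      (∀ v, (G.graph.induce (C \ {v})).Preconnected) →
      ¬((∃ i ∈ C, ∃ j ∈ C, G.pos.Adj i j) ∧ (∃ i ∈ C, ∃ j ∈ C, G.neg.Adj i j)) := by
    intro C hc hn hmixC
    obtain ⟨B, hB, hCB⟩ := exists_block_superset hc hn
    apply hnb B hB
    obtain ⟨⟨i, hi, j, hj, hij⟩, ⟨i', hi', j', hj', hij'⟩⟩ := hmixC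
    exact ⟨⟨i, hCB hi, j, hCB hj, hij⟩, ⟨i', hCB hi', j', hCB hj', hij'⟩⟩
  rw [eq_top_iff]
  intro x _
  have hx : x = ∑ p, x p •
      (WithLp.toLp 2 (fun i => if i = p then (1:ℝ) else 0) : EuclideanSpace ℝ (Fin n)) := by
    ext i
    rw [WithLp.ofLp_sum, Finset.sum_apply]
    have : ∀ p, (x p • (WithLp.toLp 2 (fun i => if i = p then (1:ℝ) else 0) :
        EuclideanSpace ℝ (Fin n))) i = if i = p then x p else 0 := by
      intro p
      show x p * (if i = p then (1:ℝ) else 0) = _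
      by_cases h : i = p
      · rw [if_pos h, if_pos h, mul_one]
      · rw [if_neg h, if_neg h, mul_zero]
    simp only [this]
    rw [Finset.sum_ite_eq (Finset.univ) i (fun p => x p)]
    simp
  rw [hx]
  apply Submodule.sum_mem
  intro p _
  apply Submodule.smul_mem
  obtain ⟨A, B, hA, hB, hs⟩ := decomp_of_no_mixed G hbl (Set.univ.ncard)
    Set.univ le_rfl p (Set.mem_univ p)
  apply Submodule.mem_sup.mpr
  refine ⟨WithLp.toLp 2 A, ?_, WithLp.toLp 2 B, ?_, ?_⟩
  · intro i j hadj
    exact hA i (Set.mem_univ i) j (Set.mem_univ j) hadj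
  · intro i j hadj
    exact hB i (Set.mem_univ i) j (Set.mem_univ j) hadj
  · ext i
    exact hs i (Set.mem_univ i)

end DecompInd

/-- A signed graph has a unique Laplacian inertia iff no block of it contains
both a positive and a negative edge. -/
theorem unique_inertia_iff_no_mixed_block {n : ℕ} (G : SignedGraph n) :
    (∃ T, HasUniqueInertia G T) ↔
    ∀ B : Set (Fin n), IsBlock G.graph B →
      ¬((∃ i ∈ B, ∃ j ∈ B, G.pos.Adj i j) ∧ (∃ i ∈ B, ∃ j ∈ B, G.neg.Adj i j)) := by
  constructor
  · rintro ⟨T, hT⟩ B hB ⟨hpe, hne⟩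
    exact not_additive_of_mixed_block G hB.1 hB.2.1 hpe hne
      (additive_of_unique G T hT)
  · intro hnb
    exact ⟨(aP G, aN G, kK G),
      fun Γ hc => inertia_of_additive G (additive_of_no_mixed_block G hnb) Γ hc⟩

end SGPaper
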